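/- Let K ⊆ L be a differential field extension, and suppose K is not algebraically closed, the constant field C of K is a proper subfield of K, and K is weakly r-differentially closed in L. If Q_1,…,Q_m ∈ K{Y} are nonzero differential polynomials of order ≤ r (m ≥ 1) having a common zero in L, then they have a common zero in K. -/

import Mathlib

open scoped Differential

section Aniso

variable {R S : Type*} [CommRing R] [CommRing S]

/-- Binary form built from coefficients `c` and degree `d`. -/
noncomputable def gBin (c : ℕ → R) (d : ℕ) (a b : R) : R :=
  ∑ i ∈ Finset.range (d + 1), c i * a ^ i * b ^ (d - i)

/-- Iterated composition of the binary form. -/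
noncomputable def Ffold (c : ℕ → R) (d : ℕ) : ∀ {m : ℕ}, (Fin (m + 1) → R) → R
  | 0, q => q 0
  | m + 1, q => gBin c d (Ffold c d (fun i => q i.castSucc)) (q (Fin.last (m + 1)))

lemma map_gBin (φ : R →+* S) (c : ℕ → R) (d : ℕ) (a b : R) :
    φ (gBin c d a b) = gBin (fun i => φ (c i)) d (φ a) (φ b) := by
  simp [gBin, map_sum]

lemma map_Ffold (φ : R →+* S) (c : ℕ → R) (d : ℕ) :
    ∀ {m : ℕ} (q : Fin (m + 1) → R),
      φ (Ffold c d q) = Ffold (fun i => φ (c i)) d (fun i => φ (q i))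
  | 0, q => rfl
  | m + 1, q => by
    simp only [Ffold, map_gBin, map_Ffold φ c d (fun i => q i.castSucc)]

lemma gBin_mem (T : Subring R) {c : ℕ → R} {d : ℕ} (hc : ∀ i, c i ∈ T) {a b : R}
    (ha : a ∈ T) (hb : b ∈ T) : gBin c d a b ∈ T := by
  refine Subring.sum_mem _ fun i _ => ?_
  exact T.mul_mem (T.mul_mem (hc i) (T.pow_mem ha i)) (T.pow_mem hb _)

lemma Ffold_mem (T : Subring R) {c : ℕ → R} {d : ℕ} (hc : ∀ i, c i ∈ T) :
    ∀ {m : ℕ} (q : Fin (m + 1) → R), (∀ i, q i ∈ T) → Ffold c d q ∈ T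
  | 0, q, hq => hq 0
  | m + 1, q, hq =>
    gBin_mem T hc (Ffold_mem T hc (fun i => q i.castSucc) (fun i => hq _)) (hq _)

lemma gBin_zero_zero {c : ℕ → R} {d : ℕ} (hd : 0 < d) : gBin c d (0 : R) 0 = 0 := by
  refine Finset.sum_eq_zero fun i _ => ?_
  rcases Nat.eq_zero_or_pos i with h | h
  · subst h; simp [zero_pow hd.ne']
  · simp [zero_pow h.ne']

lemma Ffold_zero {c : ℕ → R} {d : ℕ} (hd : 0 < d) :
    ∀ {m : ℕ}, Ffold c d (fun _ : Fin (m + 1) => (0 : R)) = 0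
  | 0 => rfl
  | m + 1 => by
    show gBin c d (Ffold c d (fun _ => 0)) 0 = 0
    rw [Ffold_zero hd, gBin_zero_zero hd]

end Aniso

section Field

variable {L : Type*} [Field L] (K : Subfield L)

lemma gBin_aniso (p : Polynomial K) (hmonic : p.Monic) (hd : 0 < p.natDegree)
    (hroot : ∀ x : K, p.eval x ≠ 0) {a b : L} (ha : a ∈ K) (hb : b ∈ K)
    (h : gBin (fun i => ((p.coeff i : K) : L)) p.natDegree a b = 0) : a = 0 ∧ b = 0 := by
  set d := p.natDegree with hdd
  by_cases hb0 : b = 0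
  · subst hb0
    refine ⟨?_, rfl⟩
    have : gBin (fun i => ((p.coeff i : K) : L)) d a 0 = a ^ d := by
      rw [gBin, Finset.sum_eq_single d]
      · rw [hdd, hmonic.coeff_natDegree]; simp
      · intro i hi hne
        have hlt : i < d := by
          have := Finset.mem_range.mp hi; omega
        simp [zero_pow (Nat.sub_ne_zero_of_lt hlt)]
      · intro hmem; exact absurd (Finset.self_mem_range_succ d) hmem
    rw [this] at h
    exact pow_eq_zero_iff hd.ne' |>.mp h
  · exfalso
    set t : K := ⟨a / b, K.div_mem ha hb⟩ with ht
    have hkey : gBin (fun i => ((p.coeff i : K) : L)) d a b = b ^ d * ((p.eval t : K) : L) := by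
      have heval : p.eval t = ∑ i ∈ Finset.range (d + 1), p.coeff i * t ^ i :=
        Polynomial.eval_eq_sum_range' (by omega) t
      rw [heval]
      push_cast
      rw [Finset.mul_sum, gBin]
      refine Finset.sum_congr rfl fun i hi => ?_
      have hid : i ≤ d := by have := Finset.mem_range.mp hi; omega
      rw [pow_sub₀ b hb0 hid]
      ring
    rw [hkey] at h
    rcases mul_eq_zero.mp h with h' | h'
    · exact pow_ne_zero d hb0 h'
    · exact hroot t (by exact_mod_cast h')

lemma Ffold_aniso {c : ℕ → L} {d : ℕ} (hc : ∀ i, c i ∈ K)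
    (haniso : ∀ a b : L, a ∈ K → b ∈ K → gBin c d a b = 0 → a = 0 ∧ b = 0) :
    ∀ {m : ℕ} (q : Fin (m + 1) → L), (∀ i, q i ∈ K) → Ffold c d q = 0 → ∀ i, q i = 0
  | 0, q, hq, h, i => by
    have : i = 0 := Fin.ext (by omega)
    rw [this]; exact h
  | m + 1, q, hq, h, i => by
    have hA : Ffold c d (fun i => q i.castSucc) ∈ K.toSubring :=
      Ffold_mem K.toSubring hc _ (fun i => hq _)
    obtain ⟨h1, h2⟩ := haniso _ _ hA (hq (Fin.last (m + 1))) h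
    induction i using Fin.lastCases with
    | last => exact h2
    | cast i => exact Ffold_aniso hc haniso (fun i => q i.castSucc) (fun i => hq _) h1 i

end Field

/-!
Let `K ⊆ L` be a differential field extension (here: `L` a differential field and
`K` a subfield closed under the derivation).  Suppose `K` is not algebraically
closed, the constant field of `K` is a proper subfield of `K`, and `K` is weakly
`r`-differentially closed in `L`.  If nonzero differential polynomials
`Q₁,…,Q_m ∈ K{Y}` of order `≤ r` (`m ≥ 1`) have a common zero in `L`, then they
have a common zero in `K`.  A differential polynomial of order `≤ r` over `K` is
encoded as an `MvPolynomial (Fin (r+1)) L` with all coefficients in `K`,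
evaluated at `(y, y′, …, y⁽ʳ⁾)`.
-/

/-- `(y, y′, y″, …)`: the `n`-th iterated derivative of `y`. -/
noncomputable def dIter {L : Type*} [Field L] [Differential L] (y : L) (n : ℕ) : L :=
  (fun t : L => t′)^[n] y

/-- Evaluation of a differential polynomial of order at most `r` at `y`. -/
noncomputable def dEval {L : Type*} [Field L] [Differential L] {r : ℕ}
    (P : MvPolynomial (Fin (r + 1)) L) (y : L) : L :=
  MvPolynomial.eval (fun i : Fin (r + 1) => dIter y (i : ℕ)) P

/-- All coefficients of `P` lie in the subfield `K`. -/
def CoeffsIn {L : Type*} [Field L] {n : ℕ} (K : Subfield L)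
    (P : MvPolynomial (Fin n) L) : Prop :=
  ∀ m, MvPolynomial.coeff m P ∈ K

/-- `K` is weakly `r`-differentially closed in `L`: every nonzero differential
polynomial over `K` of order `≤ r` with a zero in `L` has a zero in `K`. -/
def WeaklyDClosedIn {L : Type*} [Field L] [Differential L] (K : Subfield L) (r : ℕ) : Prop :=
  ∀ P : MvPolynomial (Fin (r + 1)) L, P ≠ 0 → CoeffsIn K P →
    (∃ y : L, dEval P y = 0) → ∃ y ∈ K, dEval P y = 0

section Coeffs

variable {L : Type*} [Field L] (K : Subfield L) {n : ℕ}

set_option synthInstance.maxHeartbeats 1000000 in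
lemma coeffsIn_exists_preimage {P : MvPolynomial (Fin n) L} (h : CoeffsIn K P) :
    ∃ q : MvPolynomial (Fin n) K, MvPolynomial.map (K.subtype) q = P := by
  refine ⟨∑ m ∈ P.support, MvPolynomial.monomial m ⟨P.coeff m, h m⟩, ?_⟩
  rw [map_sum (MvPolynomial.map K.subtype) _ P.support]
  simp only [MvPolynomial.map_monomial, Subfield.coe_subtype]
  exact P.support_sum_monomial_coeff

lemma coeffsIn_of_mem_range {P : MvPolynomial (Fin n) L}
    (h : P ∈ (MvPolynomial.map (K.subtype) (σ := Fin n)).range) : CoeffsIn K P := by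
  obtain ⟨q, rfl⟩ := h
  intro m
  rw [MvPolynomial.coeff_map]
  exact (q.coeff m).2

lemma eq_zero_of_coeffsIn_of_eval_eq_zero [Infinite K] {P : MvPolynomial (Fin n) L}
    (hP : CoeffsIn K P) (h : ∀ a : Fin n → K, MvPolynomial.eval (fun i => (a i : L)) P = 0) :
    P = 0 := by
  obtain ⟨q, rfl⟩ := coeffsIn_exists_preimage K hP
  suffices hq : q = 0 by rw [hq, map_zero]
  have : ∀ a : Fin n → K, MvPolynomial.eval a q = 0 := by
    intro a
    have h1 := h a
    rw [MvPolynomial.eval_map] at h1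
    have h2 : K.subtype (MvPolynomial.eval a q) =
        MvPolynomial.eval₂ K.subtype (fun i => ((a i : K) : L)) q := by
      rw [← MvPolynomial.eval₂_id q, MvPolynomial.eval₂_comp_left K.subtype]
      simp [Function.comp_def]
    have h3 : K.subtype (MvPolynomial.eval a q) = 0 := h2.trans h1
    exact Subtype.ext (by simpa using h3)
  have := MvPolynomial.funext (p := q) (q := 0) (fun x => by simp [this x])
  exact this

end Coeffs

lemma infinite_of_deriv_ne_zero {L : Type*} [Field L] [Differential L] (K : Subfield L)
    (hCK : ∃ x ∈ K, x′ ≠ 0) : Infinite K := by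
  by_contra hinf
  have : Finite K := not_infinite_iff_finite.mp hinf
  have : Fintype K := Fintype.ofFinite K
  obtain ⟨x, hxK, hx'⟩ := hCK
  set xK : K := ⟨x, hxK⟩ with hxk
  have hq : xK ^ Fintype.card K = xK := FiniteField.pow_card xK
  have hqL : x ^ Fintype.card K = x := by
    have := congrArg (K.subtype) hq
    push_cast at this
    exact this
  have hcard0 : ((Fintype.card K : ℕ) : L) = 0 := by
    have : ((Fintype.card K : ℕ) : K) = 0 := FiniteField.cast_card_eq_zero K
    have := congrArg (K.subtype) this
    push_cast at this
    exact_mod_cast this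
  have : x′ = 0 := by
    conv_lhs => rw [← hqL]
    rw [Derivation.leibniz_pow]
    rw [nsmul_eq_mul, hcard0, zero_mul]
  exact hx' this

theorem common_zero_of_weakly_d_closed {L : Type*} [Field L] [Differential L]
    (K : Subfield L) (hKder : ∀ x ∈ K, x′ ∈ K)
    (hKnotAC : ¬ IsAlgClosed K)
    (hCK : ∃ x ∈ K, x′ ≠ 0)
    (r : ℕ) (hwk : WeaklyDClosedIn K r)
    (m : ℕ) (hm : 1 ≤ m)
    (Q : Fin m → MvPolynomial (Fin (r + 1)) L)
    (hQ0 : ∀ i, Q i ≠ 0) (hQK : ∀ i, CoeffsIn K (Q i))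
    (hzero : ∃ y : L, ∀ i, dEval (Q i) y = 0) :
    ∃ y ∈ K, ∀ i, dEval (Q i) y = 0 := by
  have : Infinite K := infinite_of_deriv_ne_zero K hCK
  -- a monic irreducible polynomial over K without a root in K
  obtain ⟨p, hmonic, hirr, hnoroot⟩ :
      ∃ p : Polynomial K, p.Monic ∧ Irreducible p ∧ ∀ x : K, p.eval x ≠ 0 := by
    by_contra hcon
    push_neg at hcon
    exact hKnotAC (IsAlgClosed.of_exists_root K fun q hq hq' => hcon q hq hq')
  set d := p.natDegree with hdd
  have hd : 0 < d :=
    Polynomial.natDegree_pos_iff_degree_pos.mpr (Polynomial.degree_pos_of_irreducible hirr)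
  set c : ℕ → L := fun i => ((p.coeff i : K) : L) with hc_def
  have hc : ∀ i, c i ∈ K := fun i => (p.coeff i).2
  have haniso : ∀ a b : L, a ∈ K → b ∈ K → gBin c d a b = 0 → a = 0 ∧ b = 0 :=
    fun a b ha hb h => gBin_aniso K p hmonic hd hnoroot ha hb h
  obtain ⟨m', rfl⟩ : ∃ m', m = m' + 1 := ⟨m - 1, by omega⟩
  -- the composed differential polynomial
  set P : MvPolynomial (Fin (r + 1)) L :=
    Ffold (fun i => MvPolynomial.C (c i)) d Q with hP_def
  -- evaluation of P
  have hevalP : ∀ v : Fin (r + 1) → L,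
      MvPolynomial.eval v P = Ffold c d (fun i => MvPolynomial.eval v (Q i)) := by
    intro v
    rw [hP_def, map_Ffold (MvPolynomial.eval v)]
    simp only [MvPolynomial.eval_C]
  have hdEvalP : ∀ y : L, dEval P y = Ffold c d (fun i => dEval (Q i) y) := by
    intro y
    exact hevalP _
  -- P has coefficients in K
  have hPrange : P ∈ (MvPolynomial.map (K.subtype) (σ := Fin (r + 1))).range := by
    refine Ffold_mem (MvPolynomial.map (K.subtype)).range ?_ Q ?_
    · intro i
      exact ⟨MvPolynomial.C (p.coeff i), by simp [hc_def]⟩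
    · intro i
      exact coeffsIn_exists_preimage K (hQK i)
  have hPK : CoeffsIn K P := coeffsIn_of_mem_range K hPrange
  -- P is nonzero
  have hP0 : P ≠ 0 := by
    intro hP
    have hQvanish : ∀ (i : Fin (m' + 1)) (a : Fin (r + 1) → K),
        MvPolynomial.eval (fun j => ((a j : K) : L)) (Q i) = 0 := by
      intro i a
      have hPa : MvPolynomial.eval (fun j => ((a j : K) : L)) P = 0 := by
        rw [hP]; simp
      rw [hevalP] at hPa
      refine Ffold_aniso K hc haniso _ ?_ hPa i
      intro i'
      exact MvPolynomial.eval_mem (p := Q i') (s := K)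
        (fun j _ => hQK i' j) (fun j => (a j).2)
    exact hQ0 0 (eq_zero_of_coeffsIn_of_eval_eq_zero K (hQK 0) (hQvanish 0))
  -- P has a zero in L
  have hPzeroL : ∃ y : L, dEval P y = 0 := by
    obtain ⟨y₀, hy₀⟩ := hzero
    refine ⟨y₀, ?_⟩
    rw [hdEvalP]
    have : (fun i => dEval (Q i) y₀) = fun _ : Fin (m' + 1) => (0 : L) := funext hy₀
    rw [this, Ffold_zero hd]
  -- use weak differential closedness
  obtain ⟨y, hyK, hy⟩ := hwk P hP0 hPK hPzeroL
  refine ⟨y, hyK, ?_⟩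
  -- derivatives of y stay in K
  have hdIter : ∀ n : ℕ, dIter y n ∈ K := by
    intro n
    induction n with
    | zero => exact hyK
    | succ n ih =>
      rw [dIter, Function.iterate_succ_apply']
      exact hKder _ ih
  have hQy : ∀ i, dEval (Q i) y ∈ K := by
    intro i
    exact MvPolynomial.eval_mem (p := Q i) (s := K)
      (fun j _ => hQK i j) (fun j => hdIter j)
  rw [hdEvalP] at hy
  exact Ffold_aniso K hc haniso _ hQy hy
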